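/- Let V be a finite-dimensional real inner product space, p and q positive integers, and J : V → V a linear map with J² = p·J + q·id that is self-adjoint: ⟨J x, y⟩ = ⟨x, J y⟩ for all x, y ∈ V. Let W ⊆ V be a subspace with orthogonal projection P, and set N x = (id − P)(J x). Let D and D' be subspaces of W that are mutually orthogonal and such that J z ∈ W⊥ for every z ∈ D' (D' is anti-invariant). Then ⟨N x, N z⟩ = 0 for every x ∈ D and every z ∈ D'; that is, N(D) and N(D') are mutually perpendicular subspaces of W⊥. -/

import Mathlib

open RealInnerProductSpace

/-- For a hemi-slant model, with `D, D' ⊆ W` mutually orthogonal and `D'`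
anti-invariant (`J z ∈ W⊥` for `z ∈ D'`), the normal parts satisfy `⟪N x, N z⟫ = 0` for all
`x ∈ D`, `z ∈ D'`: the subspaces `N(D)` and `N(D')` of `W⊥` are mutually perpendicular. -/
theorem normal_parts_perpendicular {V : Type*} [NormedAddCommGroup V] [InnerProductSpace ℝ V]
    [FiniteDimensional ℝ V]
    (p q : ℕ) (hp : 0 < p) (hq : 0 < q) (J : V →ₗ[ℝ] V)
    (hJ2 : ∀ x : V, J (J x) = (p : ℝ) • J x + (q : ℝ) • x)
    (hsym : ∀ x y : V, ⟪J x, y⟫ = ⟪x, J y⟫)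
    (W : Submodule ℝ V)
    (N : V → V) (hN : ∀ x : V, N x = J x - (W.orthogonalProjection (J x) : V))
    (D D' : Submodule ℝ V) (hD : D ≤ W) (hD' : D' ≤ W)
    (horth : ∀ x ∈ D, ∀ z ∈ D', ⟪x, z⟫ = 0)
    (hanti : ∀ z ∈ D', J z ∈ Wᗮ) :
    ∀ x ∈ D, ∀ z ∈ D', ⟪N x, N z⟫ = 0 := by
  intro x hx z hz
  have hJz : J z ∈ Wᗮ := hanti z hz
  have hNz : N z = J z := by
    rw [hN, Submodule.orthogonalProjectionOnto_eq_zero_iff.mpr hJz]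
    simp
  have hP : ⟪(W.orthogonalProjection (J x) : V), J z⟫ = 0 :=
    hJz _ (W.orthogonalProjection (J x)).2
  have h1 : ⟪x, J z⟫ = 0 := hJz x (hD hx)
  have h2 : ⟪x, z⟫ = 0 := horth x hx z hz
  rw [hNz, hN, inner_sub_left, hP, sub_zero, hsym, hJ2, inner_add_right,
    inner_smul_right, inner_smul_right, h1, h2]
  ring
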